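/- Let m be even, W a set of generators with Sₘ ∪ W even of size n = m + |W|, M = M(Sₘ ∪ W) the adjacency matrix of the Cayley graph of (F₂^m, Sₘ ∪ W), and C = row space of M. Suppose c ∈ C^⊥ \ C, and let d be the minimum distance of the code with parity-check matrix whose columns are Sₘ ∪ W. Then the support of c is not contained in any ball of radius ⌊(d−1)/2⌋ − 2 in the Cayley graph metric. -/

import Mathlib

open Classical in
/-- let `m` be even, `W` a family of `w` distinct nonzero non-basis
vectors of `F₂^m` with `n = m + w` even, `M` the adjacency matrix of the Cayley graph
of `(F₂^m, Sₘ ∪ W)` and `C` its row space. If `c ∈ C^⊥ \ C` and `d` is the minimum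
distance of the code whose parity-check matrix has columns `Sₘ ∪ W` (i.e. the minimum
weight of a nonzero linear relation among the generators), then the support of `c` is
contained in no ball of radius `⌊(d-1)/2⌋ - 2` for the Cayley graph metric. -/
theorem stmt12 (m w : ℕ) (hm : Even m) (hmpos : 1 ≤ m) (hn : Even (m + w))
    (W : Fin w → (Fin m → ZMod 2)) (hWinj : Function.Injective W)
    (hWne : ∀ j, W j ≠ 0)
    (hWnotbasis : ∀ j i, W j ≠ Pi.single i 1)
    (T : Set (Fin m → ZMod 2))
    (hT : T = Set.range (fun i : Fin m => Pi.single i (1 : ZMod 2)) ∪ Set.range W)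
    (M : Matrix (Fin m → ZMod 2) (Fin m → ZMod 2) (ZMod 2))
    (hM : ∀ x y, M x y = if x + y ∈ T then 1 else 0)
    (d : ℕ)
    (hd : IsLeast {k | ∃ a : (Fin m ⊕ Fin w) → ZMod 2, a ≠ 0 ∧
      (∑ i, a i • (Sum.elim (fun i : Fin m => Pi.single i (1 : ZMod 2)) W) i) = 0 ∧
      hammingNorm a = k} d)
    (c : (Fin m → ZMod 2) → ZMod 2)
    (horth : ∀ v ∈ Submodule.span (ZMod 2) (Set.range M), ∑ y, c y * v y = 0)
    (hnotin : c ∉ Submodule.span (ZMod 2) (Set.range M)) :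
    ∀ x : Fin m → ZMod 2, ∃ y, c y ≠ 0 ∧
      ¬ ∃ l : List (Fin m → ZMod 2), (∀ s ∈ l, s ∈ T) ∧
          l.length ≤ (d - 1) / 2 - 2 ∧ x + l.sum = y := by
  -- basic char-2 facts
  have hz2 : ∀ z : ZMod 2, z + z = 0 := by decide
  have hz1 : ∀ z : ZMod 2, z ≠ 0 → z = 1 := by decide
  have hVadd : ∀ v : Fin m → ZMod 2, v + v = 0 := fun v => funext fun i => hz2 _
  have hUadd : ∀ u : (Fin m ⊕ Fin w) → ZMod 2, u + u = 0 := fun u => funext fun i => hz2 _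
  set g : (Fin m ⊕ Fin w) → (Fin m → ZMod 2) :=
    Sum.elim (fun i : Fin m => Pi.single i (1 : ZMod 2)) W with hg
  set φ : ((Fin m ⊕ Fin w) → ZMod 2) → (Fin m → ZMod 2) :=
    fun u => ∑ i, u i • g i with hφ
  set δ : (Fin m ⊕ Fin w) → ((Fin m ⊕ Fin w) → ZMod 2) :=
    fun i => Pi.single i (1 : ZMod 2) with hδ
  -- T = range g
  have hTg : T = Set.range g := by
    rw [hT, hg, Set.Sum.elim_range]
  -- injectivity of g
  have hsinj : ∀ i i' : Fin m,
      (Pi.single i (1 : ZMod 2) : Fin m → ZMod 2) = Pi.single i' (1 : ZMod 2) → i = i' := by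
    intro i i' h
    by_contra hne
    have := congrFun h i
    rw [Pi.single_eq_same, Pi.single_eq_of_ne hne] at this
    exact one_ne_zero this
  have hginj : Function.Injective g := by
    intro a b hab
    rcases a with i | j <;> rcases b with i' | j'
    · exact congrArg Sum.inl (hsinj _ _ hab)
    · exact absurd hab.symm (hWnotbasis j' i)
    · exact absurd hab (hWnotbasis j i')
    · exact congrArg Sum.inr (hWinj hab)
  -- linearity of φ
  have φ_add : ∀ u v, φ (u + v) = φ u + φ v := by
    intro u v
    simp only [hφ, Pi.add_apply, add_smul, Finset.sum_add_distrib]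
  have φ_zero : φ 0 = 0 := by simp [hφ]
  have φ_single : ∀ i, φ (δ i) = g i := by
    intro i
    simp only [hφ, hδ]
    rw [Finset.sum_eq_single i]
    · rw [Pi.single_eq_same, one_smul]
    · intro j _ hji
      rw [Pi.single_eq_of_ne hji, zero_smul]
    · intro h; exact absurd (Finset.mem_univ i) h
  -- hammingNorm facts
  have hN_add : ∀ u v : (Fin m ⊕ Fin w) → ZMod 2,
      hammingNorm (u + v) ≤ hammingNorm u + hammingNorm v := by
    intro u v
    calc hammingNorm (u + v) = hammingDist (u + v) 0 := (hammingDist_zero_right _).symm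
    _ ≤ hammingDist (u + v) v + hammingDist v 0 := hammingDist_triangle _ _ _
    _ = hammingNorm u + hammingNorm v := by
        rw [hammingDist_zero_right, hammingDist_comm, hammingDist_eq_hammingNorm,
          show -v + (u + v) = u by abel]
  have hN_single : ∀ i, hammingNorm (δ i) ≤ 1 := by
    intro i
    have hsub : ({j | δ i j ≠ 0} : Finset _) ⊆ {i} := by
      intro j hj
      simp only [Finset.mem_filter, Finset.mem_univ, true_and] at hj
      simp only [Finset.mem_singleton]
      by_contra hji
      exact hj (by simp only [hδ]; exact Pi.single_eq_of_ne hji 1)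
    simpa [hammingNorm] using Finset.card_le_card hsub
  have hN_addd : ∀ (u : (Fin m ⊕ Fin w) → ZMod 2) (i),
      hammingNorm (u + δ i) ≤ hammingNorm u + 1 :=
    fun u i => le_trans (hN_add u (δ i)) (by have := hN_single i; omega)
  have hN_back : ∀ (u : (Fin m ⊕ Fin w) → ZMod 2) (i),
      hammingNorm u ≤ hammingNorm (u + δ i) + 1 := by
    intro u i
    have h1 : u = (u + δ i) + δ i := by
      rw [add_assoc, hUadd (δ i), add_zero]
    calc hammingNorm u = hammingNorm ((u + δ i) + δ i) := by rw [← h1]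
    _ ≤ hammingNorm (u + δ i) + 1 := hN_addd _ i
  -- key injectivity from minimum distance
  have φ_inj : ∀ t : ℕ, 2 * t ≤ d - 1 → ∀ u v : (Fin m ⊕ Fin w) → ZMod 2,
      hammingNorm u ≤ t → hammingNorm v ≤ t → φ u = φ v → u = v := by
    intro t ht u v hu hv huv
    by_contra hne
    have hane : u + v ≠ 0 := by
      intro h0
      apply hne
      have h2 : u = (u + v) + v := by rw [add_assoc, hUadd v, add_zero]
      rw [h0, zero_add] at h2
      exact h2
    have hrel : (∑ i, (u + v) i • g i) = 0 := by
      have h3 : φ (u + v) = 0 := by rw [φ_add, huv, hVadd]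
      simpa [hφ] using h3
    have hdle : d ≤ hammingNorm (u + v) := hd.2 ⟨u + v, hane, hrel, rfl⟩
    have hge : hammingNorm (u + v) ≤ 2 * t := le_trans (hN_add u v) (by omega)
    have hd1 : 1 ≤ d := by
      obtain ⟨a, ha0, -, hak⟩ := hd.1
      have : hammingNorm a ≠ 0 := hammingNorm_ne_zero_iff.2 ha0
      omega
    omega
  -- lists of generators give small-weight vectors
  have list_φ : ∀ l : List (Fin m → ZMod 2), (∀ s ∈ l, s ∈ T) →
      ∃ u : (Fin m ⊕ Fin w) → ZMod 2, hammingNorm u ≤ l.length ∧ φ u = l.sum := by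
    intro l
    induction l with
    | nil => intro _; exact ⟨0, by simp [φ_zero]⟩
    | cons s l ih =>
      intro hl
      obtain ⟨u, hu, hφu⟩ := ih (fun s hs => hl s (List.mem_cons_of_mem _ hs))
      have hs : s ∈ T := hl s List.mem_cons_self
      rw [hTg] at hs
      obtain ⟨i, hi⟩ := hs
      refine ⟨u + δ i, ?_, ?_⟩
      · have := hN_addd u i
        simp only [List.length_cons]
        omega
      · rw [φ_add, hφu, φ_single, List.sum_cons, hi, add_comm]
  -- row evaluation
  have row_eval : ∀ z y, M z y = ∑ i, (if y = z + g i then (1 : ZMod 2) else 0) := by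
    intro z y
    have hiff : ∀ i, (y = z + g i) ↔ (z + y = g i) := by
      intro i
      constructor
      · intro h; rw [h, ← add_assoc, hVadd z, zero_add]
      · intro h; rw [← h, ← add_assoc, hVadd z, zero_add]
    rw [hM, hTg]
    by_cases hzy : z + y ∈ Set.range g
    · obtain ⟨i0, hi0⟩ := hzy
      rw [if_pos ⟨i0, hi0⟩]
      rw [Finset.sum_eq_single i0]
      · rw [if_pos ((hiff i0).2 hi0.symm)]
      · intro j _ hj
        have hcond : ¬ (y = z + g j) := by
          intro h
          exact hj (hginj (((hiff j).1 h).symm.trans hi0.symm))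
        rw [if_neg hcond]
      · intro h; exact absurd (Finset.mem_univ i0) h
    · rw [if_neg hzy]
      symm
      apply Finset.sum_eq_zero
      intro i _
      have hcond : ¬ (y = z + g i) := by
        intro h
        exact hzy ⟨i, ((hiff i).1 h).symm⟩
      rw [if_neg hcond]
  -- orthogonality against each row
  have sigma_c : ∀ z, ∑ i, c (z + g i) = 0 := by
    intro z
    have hz : ∑ y, c y * M z y = 0 :=
      horth (M z) (Submodule.subset_span ⟨z, rfl⟩)
    rw [← hz]
    symm
    calc ∑ y, c y * M z y
        = ∑ y, ∑ i, c y * (if y = z + g i then (1:ZMod 2) else 0) := by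
          apply Finset.sum_congr rfl
          intro y _
          rw [row_eval, Finset.mul_sum]
    _ = ∑ i, ∑ y, c y * (if y = z + g i then (1:ZMod 2) else 0) := Finset.sum_comm
    _ = ∑ i, c (z + g i) := by
          apply Finset.sum_congr rfl
          intro i _
          rw [Finset.sum_eq_single (z + g i)]
          · rw [if_pos rfl, mul_one]
          · intro y _ hy; rw [if_neg hy, mul_zero]
          · intro h; exact absurd (Finset.mem_univ _) h
  -- now the main argument
  intro x
  by_contra hcon
  push_neg at hcon
  by_cases hd7 : d ≤ 6
  -- easy case : radius 0
  · have hr0 : (d - 1) / 2 - 2 = 0 := by omega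
    have hsupp : ∀ y, c y ≠ 0 → y = x := by
      intro y hy
      obtain ⟨l, hl, hlen, hsum⟩ := hcon y hy
      rw [hr0, Nat.le_zero, List.length_eq_zero_iff] at hlen
      rw [hlen, List.sum_nil, add_zero] at hsum
      exact hsum.symm
    set g0 : Fin m → ZMod 2 := Pi.single (⟨0, hmpos⟩ : Fin m) 1 with hg0
    have hg0T : g0 ∈ T := by rw [hT]; exact Or.inl ⟨_, rfl⟩
    have hrow := horth (M (x + g0)) (Submodule.subset_span ⟨x + g0, rfl⟩)
    rw [Finset.sum_eq_single x] at hrow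
    · rw [hM] at hrow
      have hxx : (x + g0) + x = g0 := by
        rw [add_comm x g0, add_assoc, hVadd x, add_zero]
      rw [hxx, if_pos hg0T, mul_one] at hrow
      apply hnotin
      have hc0 : c = 0 := by
        funext y
        by_cases hy : c y = 0
        · exact hy
        · rw [hsupp y hy]; exact hrow
      rw [hc0]
      exact Submodule.zero_mem _
    · intro y _ hy
      by_cases hcy : c y = 0
      · rw [hcy, zero_mul]
      · exact absurd (hsupp y hcy) hy
    · intro h; exact absurd (Finset.mem_univ x) h
  -- main case : d ≥ 7
  · push_neg at hd7
    set t : ℕ := (d - 1) / 2 with htdef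
    have ht3 : 3 ≤ t := by omega
    have h2t : 2 * t ≤ d - 1 := by omega
    set r : ℕ := t - 2 with hrdef
    -- support of c is in the ball of radius r around x
    have csupp : ∀ y, c y ≠ 0 → ∃ v, hammingNorm v ≤ r ∧ y = x + φ v := by
      intro y hy
      obtain ⟨l, hl, hlen, hsum⟩ := hcon y hy
      obtain ⟨u, hu, hφu⟩ := list_φ l hl
      exact ⟨u, le_trans hu hlen, by rw [hφu, hsum]⟩
    set ct : ((Fin m ⊕ Fin w) → ZMod 2) → ZMod 2 :=
      fun u => if hammingNorm u ≤ t then c (x + φ u) else 0 with hct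
    have ct_supp : ∀ u, ct u ≠ 0 → hammingNorm u ≤ r := by
      intro u hu
      simp only [hct] at hu
      by_cases h : hammingNorm u ≤ t
      · rw [if_pos h] at hu
        obtain ⟨v, hv, hyv⟩ := csupp _ hu
        have hφuv : φ u = φ v := add_left_cancel hyv
        have huv : u = v := φ_inj t h2t u v h (le_trans hv (by omega)) hφuv
        rw [huv]; exact hv
      · rw [if_neg h] at hu; exact absurd rfl hu
    -- pulled-back orthogonality
    have sigma_ct : ∀ u, ∑ i, ct (u + δ i) = 0 := by
      intro u
      by_cases hu : hammingNorm u ≤ t - 1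
      · have heq : ∀ i, ct (u + δ i) = c ((x + φ u) + g i) := by
          intro i
          simp only [hct]
          have hle : hammingNorm (u + δ i) ≤ t := le_trans (hN_addd u i) (by omega)
          rw [if_pos hle, φ_add, φ_single, add_assoc]
        calc ∑ i, ct (u + δ i) = ∑ i, c ((x + φ u) + g i) :=
              Finset.sum_congr rfl (fun i _ => heq i)
        _ = 0 := sigma_c _
      · apply Finset.sum_eq_zero
        intro i _
        by_contra hne
        have h1 := ct_supp _ hne
        have h2 := hN_back u i
        omega
    -- the coefficient function b
    set i0 : Fin m ⊕ Fin w := Sum.inl ⟨0, hmpos⟩ with hi0def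
    set E : Finset (Fin m ⊕ Fin w) := Finset.univ.erase i0 with hEdef
    set b : ((Fin m ⊕ Fin w) → ZMod 2) → ZMod 2 :=
      fun u => if u i0 = 0 then ∑ j ∈ E, ct (u + δ j) else 0 with hb
    have b_supp : ∀ u, b u ≠ 0 → hammingNorm u ≤ r + 1 := by
      intro u hu
      simp only [hb] at hu
      by_cases h : u i0 = 0
      · rw [if_pos h] at hu
        obtain ⟨j, -, hj⟩ := Finset.exists_ne_zero_of_sum_ne_zero hu
        have h1 := ct_supp _ hj
        have h2 := hN_back u j
        omega
      · rw [if_neg h] at hu; exact absurd rfl hu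
    -- card of E
    have hcardE : E.card = m + w - 1 := by
      rw [hEdef, Finset.card_erase_of_mem (Finset.mem_univ _)]
      simp [Fintype.card_sum]
    -- single coordinate facts
    have hδi0 : ∀ j, j ≠ i0 → δ j i0 = 0 := by
      intro j hj
      simp only [hδ]
      exact Pi.single_eq_of_ne (Ne.symm hj) 1
    have hδi0' : δ i0 i0 = 1 := by
      simp only [hδ]
      exact Pi.single_eq_same i0 1
    -- the key hypercube identity
    have key : ∀ v, ∑ i, b (v + δ i) = ct v := by
      intro v
      by_cases hv : v i0 = 0
      · -- slice v i0 = 0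
        have hsplit : ∑ i, b (v + δ i) = (∑ i ∈ E, b (v + δ i)) + b (v + δ i0) := by
          rw [hEdef, Finset.sum_erase_add]
          exact Finset.mem_univ _
        have hlast : b (v + δ i0) = 0 := by
          have hcond : ¬ ((v + δ i0) i0 = 0) := by
            rw [Pi.add_apply, hv, hδi0', zero_add]
            exact one_ne_zero
          simp only [hb]
          rw [if_neg hcond]
        have hterm : ∀ i ∈ E, b (v + δ i) = ∑ j ∈ E, ct (v + δ i + δ j) := by
          intro i hi
          have hcond : (v + δ i) i0 = 0 := by
            rw [Pi.add_apply, hv, hδi0 i (Finset.ne_of_mem_erase hi), add_zero]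
          simp only [hb]
          rw [if_pos hcond]
        rw [hsplit, hlast, add_zero, Finset.sum_congr rfl hterm]
        -- double sum: diagonal + off-diagonal
        have hdiag : ∀ i : Fin m ⊕ Fin w, ct (v + δ i + δ i) = ct v := by
          intro i
          congr 1
          rw [add_assoc, hUadd (δ i), add_zero]
        have hsplit2 : ∀ i ∈ E, (∑ j ∈ E, ct (v + δ i + δ j))
            = ct v + ∑ j ∈ E.erase i, ct (v + δ i + δ j) := by
          intro i hi
          rw [← Finset.sum_erase_add E _ hi, hdiag i, add_comm]
        have hodd : (∑ _i ∈ E, ct v) = ct v := by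
          rw [Finset.sum_const, hcardE]
          have hmw1 : (m + w - 1) % 2 = 1 := by
            obtain ⟨k, hk⟩ := hn
            omega
          have hcast : ((m + w - 1 : ℕ) : ZMod 2) = 1 := by
            rw [← ZMod.natCast_mod, hmw1, Nat.cast_one]
          rw [nsmul_eq_mul, hcast, one_mul]
        have hoff : ∑ i ∈ E, ∑ j ∈ E.erase i, ct (v + δ i + δ j) = 0 := by
          have hrw : ∀ i ∈ E, ∑ j ∈ E.erase i, ct (v + δ i + δ j)
              = ∑ j ∈ E, if j ≠ i then ct (v + δ i + δ j) else 0 := by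
            intro i _
            rw [← Finset.filter_ne' E i, Finset.sum_filter]
          rw [Finset.sum_congr rfl hrw, ← Finset.sum_product']
          refine Finset.sum_involution (fun p _ => (p.2, p.1)) ?_ ?_ ?_ ?_
          · intro ⟨i, j⟩ _
            simp only
            by_cases hij : j ≠ i
            · rw [if_pos hij, if_pos (Ne.symm hij)]
              have h1 : v + δ i + δ j = v + δ j + δ i := by
                rw [add_assoc, add_assoc, add_comm (δ i) (δ j)]
              rw [h1]
              exact hz2 _
            · rw [if_neg hij, if_neg (fun h => hij (Ne.symm h)), add_zero]
          · intro ⟨i, j⟩ _ hne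
            have hij : j ≠ i := by
              intro h
              rw [if_neg (not_not_intro h)] at hne
              exact hne rfl
            intro h
            exact hij (congrArg Prod.fst h)
          · intro ⟨i, j⟩ hp
            rw [Finset.mem_product] at hp ⊢
            exact ⟨hp.2, hp.1⟩
          · intro ⟨i, j⟩ _
            rfl
        rw [Finset.sum_congr rfl hsplit2, Finset.sum_add_distrib, hodd, hoff, add_zero]
      · -- slice v i0 = 1
        have hv1 : v i0 = 1 := hz1 _ hv
        have hsingle : ∑ i, b (v + δ i) = b (v + δ i0) := by
          rw [Finset.sum_eq_single i0]
          · intro j _ hj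
            have hcond : ¬ ((v + δ j) i0 = 0) := by
              rw [Pi.add_apply, hv1, hδi0 j hj, add_zero]
              exact one_ne_zero
            simp only [hb]
            rw [if_neg hcond]
          · intro h; exact absurd (Finset.mem_univ _) h
        have hpos : b (v + δ i0) = ∑ j ∈ E, ct (v + δ i0 + δ j) := by
          have hcond : (v + δ i0) i0 = 0 := by
            rw [Pi.add_apply, hv1, hδi0']
            exact hz2 1
          simp only [hb]
          rw [if_pos hcond]
        have hσ := sigma_ct (v + δ i0)
        have hsplitσ : (∑ j ∈ E, ct (v + δ i0 + δ j)) + ct (v + δ i0 + δ i0)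
            = ∑ j, ct (v + δ i0 + δ j) := by
          rw [hEdef, Finset.sum_erase_add]
          exact Finset.mem_univ _
        have hvv : ct (v + δ i0 + δ i0) = ct v := by
          congr 1
          rw [add_assoc, hUadd (δ i0), add_zero]
        rw [hsingle, hpos]
        have hkey : (∑ j ∈ E, ct (v + δ i0 + δ j)) + ct v = 0 := by
          rw [← hvv, hsplitσ, hσ]
        calc ∑ j ∈ E, ct (v + δ i0 + δ j)
            = (∑ j ∈ E, ct (v + δ i0 + δ j)) + (ct v + ct v) := by rw [hz2, add_zero]
        _ = ((∑ j ∈ E, ct (v + δ i0 + δ j)) + ct v) + ct v := by rw [add_assoc]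
        _ = ct v := by rw [hkey, zero_add]
    -- conclude: c is a combination of rows
    apply hnotin
    have hc : c = ∑ u : (Fin m ⊕ Fin w) → ZMod 2, b u • M (x + φ u) := by
      funext y
      rw [Finset.sum_apply]
      have hterm : ∀ u, (b u • M (x + φ u)) y
          = ∑ i, b u * (if y = (x + φ u) + g i then (1:ZMod 2) else 0) := by
        intro u
        rw [Pi.smul_apply, smul_eq_mul, row_eval, Finset.mul_sum]
      rw [Finset.sum_congr rfl (fun u _ => hterm u), Finset.sum_comm]
      by_cases hy : ∃ v, hammingNorm v ≤ t ∧ y = x + φ v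
      · obtain ⟨v, hvt, hyv⟩ := hy
        have hinner : ∀ i, (∑ u : (Fin m ⊕ Fin w) → ZMod 2,
            b u * (if y = (x + φ u) + g i then (1:ZMod 2) else 0)) = b (v + δ i) := by
          intro i
          rw [Finset.sum_eq_single (v + δ i)]
          · have hcond : y = (x + φ (v + δ i)) + g i := by
              rw [φ_add, φ_single, hyv, add_assoc, add_assoc, hVadd (g i), add_zero]
            rw [if_pos hcond, mul_one]
          · intro u _ hu
            by_cases hbu : b u = 0
            · rw [hbu, zero_mul]
            · have hcond : ¬ (y = (x + φ u) + g i) := by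
                intro hcond
                apply hu
                have hφeq : φ (u + δ i) = φ v := by
                  apply add_left_cancel (a := x)
                  rw [φ_add, φ_single, ← add_assoc, ← hcond, hyv]
                have hNu : hammingNorm (u + δ i) ≤ t := by
                  have h1 := b_supp u hbu
                  have h2 := hN_addd u i
                  omega
                have huv := φ_inj t h2t (u + δ i) v hNu hvt hφeq
                rw [← huv, add_assoc, hUadd (δ i), add_zero]
              rw [if_neg hcond, mul_zero]
          · intro h; exact absurd (Finset.mem_univ _) h
        rw [Finset.sum_congr rfl (fun i _ => hinner i), key v]
        simp only [hct]
        rw [if_pos hvt, hyv]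
      · -- y outside the ball of radius t
        have hcy : c y = 0 := by
          by_contra hne
          obtain ⟨v, hvr, hyv⟩ := csupp y hne
          exact hy ⟨v, by omega, hyv⟩
        rw [hcy]
        symm
        apply Finset.sum_eq_zero
        intro i _
        apply Finset.sum_eq_zero
        intro u _
        by_cases hbu : b u = 0
        · rw [hbu, zero_mul]
        · have hcond : ¬ (y = (x + φ u) + g i) := by
            intro hcond
            apply hy
            refine ⟨u + δ i, ?_, ?_⟩
            · have h1 := b_supp u hbu
              have h2 := hN_addd u i
              omega
            · rw [φ_add, φ_single, hcond, add_assoc]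
          rw [if_neg hcond, mul_zero]
    rw [hc]
    exact Submodule.sum_mem _ (fun u _ =>
      Submodule.smul_mem _ _ (Submodule.subset_span ⟨x + φ u, rfl⟩))
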